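/- Let q ∈ (0,∞) and let (X,ρ,μ) be a space of homogeneous type satisfying the weak reverse doubling (WRD) condition. Then there exists a positive constant C such that for every x ∈ X, liminf_{s→0⁺} s·∫_{X∖B(x,s^{−1/q})} 1/(U(x,y)·ρ(x,y)^{sq}) dμ(y) ≥ C. -/

import Mathlib

noncomputable section

open MeasureTheory Filter Set
open scoped ENNReal NNReal Topology

namespace Paper

variable {X : Type*} [MeasurableSpace X]

/-- The ball with center `x` and radius `r` for the quasi-metric `ρ`. -/
def ball (ρ : X → X → ℝ) (x : X) (r : ℝ) : Set X := {y | ρ x y < r}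

/-- `(X, ρ, μ)` is a quasi-metric measure space with quasi-triangle constant `K₀`:
`ρ` is a quasi-metric with constant `K₀` and all `ρ`-balls are `μ`-measurable. -/
structure IsQuasiMetricMeasure (ρ : X → X → ℝ) (μ : Measure X) (K₀ : ℝ) : Prop where
  nonneg : ∀ x y, 0 ≤ ρ x y
  eq_zero_iff : ∀ x y, ρ x y = 0 ↔ x = y
  symm : ∀ x y, ρ x y = ρ y x
  one_le : 1 ≤ K₀
  triangle : ∀ x y z, ρ x z ≤ K₀ * (ρ x y + ρ y z)
  measurableSet_ball : ∀ x r, MeasurableSet (ball ρ x r)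

/-- The doubling condition for `μ` with doubling constant `L ∈ [1, ∞)`:
`0 < μ(B(x,2r)) ≤ L · μ(B(x,r)) < ∞` for all `x` and `r > 0`. -/
def IsDoubling (ρ : X → X → ℝ) (μ : Measure X) (L : ℝ≥0∞) : Prop :=
  1 ≤ L ∧ L < ∞ ∧ ∀ (x : X) (r : ℝ), 0 < r →
    0 < μ (ball ρ x r) ∧ μ (ball ρ x (2 * r)) ≤ L * μ (ball ρ x r) ∧ μ (ball ρ x r) < ∞

/-- `U(x,y) := min{μ(B(x,ρ(x,y))), μ(B(y,ρ(x,y)))}`. -/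
def U (ρ : X → X → ℝ) (μ : Measure X) (x y : X) : ℝ≥0∞ :=
  min (μ (ball ρ x (ρ x y))) (μ (ball ρ y (ρ x y)))

/-- The weak reverse doubling (WRD) condition. -/
def WRD (ρ : X → X → ℝ) (μ : Measure X) : Prop :=
  ∃ (x₀ : X) (lam C : ℝ), 1 < lam ∧ 1 < C ∧
    ENNReal.ofReal C ≤
      liminf (fun r : ℝ => μ (ball ρ x₀ (lam * r)) / μ (ball ρ x₀ r)) atTop

set_option maxHeartbeats 1000000 in
lemma key_lintegral (ρ : X → X → ℝ) (μ : Measure X) (x : X)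
    (hmeas : ∀ x r, MeasurableSet (ball ρ x r))
    (Λ R₁ e : ℝ) (hΛ : 1 ≤ Λ) (hR₁ : 0 < R₁) (he : 0 ≤ e)
    (hA : ∀ R, R₁ ≤ R → 0 < μ (ball ρ x (Λ * R)) ∧ μ (ball ρ x (Λ * R)) < ∞ ∧
      μ (ball ρ x (Λ * R)) ≤ 2 * μ (ball ρ x (Λ * R) \ ball ρ x R)) :
    ∀ (n : ℕ) (R : ℝ), R₁ ≤ R →
      (n : ℝ≥0∞) * (2⁻¹ * (ENNReal.ofReal (Λ ^ n * R) ^ e)⁻¹) ≤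
        ∫⁻ y in (ball ρ x R)ᶜ, 1 / (U ρ μ x y * ENNReal.ofReal (ρ x y) ^ e) ∂μ := by
  intro n
  induction n with
  | zero => intro R _; simp
  | succ n ih =>
    intro R hR
    obtain ⟨hW0, hWt, hWA⟩ := hA R hR
    set W := μ (ball ρ x (Λ * R)) with hWdef
    set P := ENNReal.ofReal (Λ * R) ^ e with hPdef
    have hRpos : 0 < R := lt_of_lt_of_le hR₁ hR
    have hΛR : R ≤ Λ * R := le_mul_of_one_le_left hRpos.le hΛ
    have hsub : ball ρ x R ⊆ ball ρ x (Λ * R) := fun y hy => lt_of_lt_of_le hy hΛR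
    set A := ball ρ x (Λ * R) \ ball ρ x R with hAdef
    have hAB : A ∪ (ball ρ x (Λ * R))ᶜ ⊆ (ball ρ x R)ᶜ := by
      rintro y (⟨_, h2⟩ | h)
      · exact h2
      · exact fun hy => h (hsub hy)
    have hdisj : Disjoint A (ball ρ x (Λ * R))ᶜ :=
      disjoint_compl_right.mono_left diff_subset
    have hAmeas : MeasurableSet A := (hmeas x (Λ * R)).diff (hmeas x R)
    have hpt : ∀ y ∈ A, (W * P)⁻¹ ≤ 1 / (U ρ μ x y * ENNReal.ofReal (ρ x y) ^ e) := by
      intro y hy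
      have hylt : ρ x y < Λ * R := hy.1
      have hU : U ρ μ x y ≤ W := by
        refine le_trans (min_le_left _ _) (measure_mono fun z hz => ?_)
        exact lt_trans hz hylt
      have hQ : ENNReal.ofReal (ρ x y) ^ e ≤ P :=
        ENNReal.rpow_le_rpow (ENNReal.ofReal_le_ofReal hylt.le) he
      rw [one_div]
      exact ENNReal.inv_le_inv.2 (mul_le_mul' hU hQ)
    have hint : 2⁻¹ * P⁻¹ ≤ ∫⁻ y in A, 1 / (U ρ μ x y * ENNReal.ofReal (ρ x y) ^ e) ∂μ := by
      have h1 : ∫⁻ _ in A, (W * P)⁻¹ ∂μ = (W * P)⁻¹ * μ A := setLIntegral_const A _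
      have h2 : (W * P)⁻¹ * (W / 2) ≤ (W * P)⁻¹ * μ A := by
        refine mul_le_mul_right ?_ _
        rw [ENNReal.div_le_iff_le_mul (Or.inl two_ne_zero) (Or.inl ENNReal.ofNat_ne_top)]
        rwa [mul_comm] at hWA
      have h3 : (W * P)⁻¹ * (W / 2) = 2⁻¹ * P⁻¹ := by
        rw [ENNReal.mul_inv (Or.inl hW0.ne') (Or.inl hWt.ne), div_eq_mul_inv]
        rw [show W⁻¹ * P⁻¹ * (W * 2⁻¹) = (W⁻¹ * W) * (P⁻¹ * 2⁻¹) by ring]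
        rw [ENNReal.inv_mul_cancel hW0.ne' hWt.ne, one_mul, mul_comm]
      calc 2⁻¹ * P⁻¹ = (W * P)⁻¹ * (W / 2) := h3.symm
        _ ≤ (W * P)⁻¹ * μ A := h2
        _ = ∫⁻ _ in A, (W * P)⁻¹ ∂μ := h1.symm
        _ ≤ _ := setLIntegral_mono' hAmeas hpt
    have hIH := ih (Λ * R) (le_trans hR hΛR)
    have hrw : Λ ^ n * (Λ * R) = Λ ^ (n + 1) * R := by ring
    rw [hrw] at hIH
    have hΛn : Λ * R ≤ Λ ^ (n + 1) * R := by
      have h1 : Λ ≤ Λ ^ (n + 1) := le_self_pow₀ hΛ (Nat.succ_ne_zero n)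
      exact mul_le_mul_of_nonneg_right h1 hRpos.le
    set Q := ENNReal.ofReal (Λ ^ (n + 1) * R) ^ e with hQdef
    have hP1 : Q⁻¹ ≤ P⁻¹ :=
      ENNReal.inv_le_inv.2 (ENNReal.rpow_le_rpow (ENNReal.ofReal_le_ofReal hΛn) he)
    have hunion := lintegral_union (μ := μ)
      (f := fun y => 1 / (U ρ μ x y * ENNReal.ofReal (ρ x y) ^ e))
      (hmeas x (Λ * R)).compl hdisj
    calc ((n + 1 : ℕ) : ℝ≥0∞) * (2⁻¹ * Q⁻¹)
        = (n : ℝ≥0∞) * (2⁻¹ * Q⁻¹) + 2⁻¹ * Q⁻¹ := by push_cast; ring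
      _ ≤ (∫⁻ y in (ball ρ x (Λ * R))ᶜ, 1 / (U ρ μ x y * ENNReal.ofReal (ρ x y) ^ e) ∂μ)
            + ∫⁻ y in A, 1 / (U ρ μ x y * ENNReal.ofReal (ρ x y) ^ e) ∂μ :=
          add_le_add hIH (le_trans (mul_le_mul_right hP1 _) hint)
      _ = ∫⁻ y in A ∪ (ball ρ x (Λ * R))ᶜ, 1 / (U ρ μ x y * ENNReal.ofReal (ρ x y) ^ e) ∂μ := by
          rw [hunion, add_comm]
      _ ≤ _ := lintegral_mono_set hAB

set_option maxHeartbeats 1000000 in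
theorem statement4 [Nonempty X] (ρ : X → X → ℝ) (μ : Measure X) (K₀ : ℝ) (L : ℝ≥0∞)
    (hX : IsQuasiMetricMeasure ρ μ K₀) (hL : IsDoubling ρ μ L) (hWRD : WRD ρ μ)
    (q : ℝ) (hq : 0 < q) :
    ∃ C : ℝ≥0∞, 0 < C ∧ ∀ x : X,
      C ≤ liminf (fun s : ℝ => ENNReal.ofReal s *
          ∫⁻ y in (ball ρ x (s ^ (-(1 / q))))ᶜ,
            1 / (U ρ μ x y * ENNReal.ofReal (ρ x y) ^ (s * q)) ∂μ) (𝓝[>] (0:ℝ)) := by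
  obtain ⟨x₀, lam, Cw, hlam, hCw, hliminf⟩ := hWRD
  obtain ⟨hL1, hLt, hLd⟩ := hL
  have hK1 : 1 ≤ K₀ := hX.one_le
  set c₀ : ℝ := (1 + Cw) / 2 with hc₀def
  have hc₀1 : 1 < c₀ := by simp only [hc₀def]; linarith
  have hc₀C : c₀ < Cw := by simp only [hc₀def]; linarith
  -- eventual reverse doubling at x₀
  have hev : ∀ᶠ r in (atTop : Filter ℝ),
      ENNReal.ofReal c₀ < μ (ball ρ x₀ (lam * r)) / μ (ball ρ x₀ r) :=
    eventually_lt_of_lt_liminf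
      (lt_of_lt_of_le ((ENNReal.ofReal_lt_ofReal_iff (by linarith)).2 hc₀C) hliminf)
  obtain ⟨r₀', hr₀'⟩ := eventually_atTop.1 hev
  set r₀ : ℝ := max r₀' 1 with hr₀def
  have hr₀1 : (1:ℝ) ≤ r₀ := le_max_right _ _
  have hrd : ∀ r, r₀ ≤ r → ENNReal.ofReal c₀ * μ (ball ρ x₀ r) ≤ μ (ball ρ x₀ (lam * r)) := by
    intro r hr
    have hrpos : 0 < r := lt_of_lt_of_le one_pos (le_trans hr₀1 hr)
    obtain ⟨hb0, _, hbt⟩ := hLd x₀ r hrpos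
    exact (ENNReal.le_div_iff_mul_le (Or.inl hb0.ne') (Or.inl hbt.ne)).1
      (hr₀' r (le_trans (le_max_left _ _) hr)).le
  have hlam0 : 0 < lam := lt_trans one_pos hlam
  have hiter : ∀ (n : ℕ) (r : ℝ), r₀ ≤ r →
      (ENNReal.ofReal c₀) ^ n * μ (ball ρ x₀ r) ≤ μ (ball ρ x₀ (lam ^ n * r)) := by
    intro n
    induction n with
    | zero => intro r _; simp
    | succ n ih =>
      intro r hr
      have hrpos : 0 < r := lt_of_lt_of_le one_pos (le_trans hr₀1 hr)
      have h1 : r ≤ lam ^ n * r :=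
        le_mul_of_one_le_left hrpos.le (one_le_pow₀ hlam.le)
      have h2 := hrd (lam ^ n * r) (le_trans hr h1)
      have h3 : lam * (lam ^ n * r) = lam ^ (n + 1) * r := by ring
      rw [h3] at h2
      calc (ENNReal.ofReal c₀) ^ (n + 1) * μ (ball ρ x₀ r)
          = ENNReal.ofReal c₀ * ((ENNReal.ofReal c₀) ^ n * μ (ball ρ x₀ r)) := by
            rw [pow_succ]; ring
        _ ≤ ENNReal.ofReal c₀ * μ (ball ρ x₀ (lam ^ n * r)) := mul_le_mul_right (ih r hr) _
        _ ≤ _ := h2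
  obtain ⟨j, hj⟩ := pow_unbounded_of_one_lt (2:ℝ) hc₀1
  obtain ⟨m, hm⟩ := pow_unbounded_of_one_lt (4 * K₀ ^ 2 * lam ^ j) hlam
  set Λ : ℝ := lam ^ m with hΛdef
  have hΛ4 : 4 * K₀ ^ 2 * lam ^ j ≤ Λ := hm.le
  have hlamj1 : (1:ℝ) ≤ lam ^ j := one_le_pow₀ hlam.le
  have hΛ1 : 1 ≤ Λ := by nlinarith
  have hΛpos : 0 < Λ := lt_of_lt_of_le one_pos hΛ1
  refine ⟨ENNReal.ofReal (Λ ^ (-(2 * q)) / 4), ?_, ?_⟩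
  · exact ENNReal.ofReal_pos.2 (by positivity)
  intro x
  set D : ℝ := ρ x x₀ with hDdef
  have hD0 : 0 ≤ D := hX.nonneg x x₀
  set R₁ : ℝ := max r₀ (max D 1) with hR₁def
  have hR₁1 : (1:ℝ) ≤ R₁ := le_trans (le_max_right D 1) (le_max_right _ _)
  have hR₁0 : (0:ℝ) < R₁ := lt_of_lt_of_le one_pos hR₁1
  -- the annulus estimate
  have hA : ∀ R, R₁ ≤ R → 0 < μ (ball ρ x (Λ * R)) ∧ μ (ball ρ x (Λ * R)) < ∞ ∧
      μ (ball ρ x (Λ * R)) ≤ 2 * μ (ball ρ x (Λ * R) \ ball ρ x R) := by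
    intro R hR
    have hR0 : 0 < R := lt_of_lt_of_le hR₁0 hR
    have hDR : D ≤ R := le_trans (le_trans (le_max_left D 1) (le_max_right r₀ _)) hR
    obtain ⟨hW0, _, hWt⟩ := hLd x (Λ * R) (by positivity)
    refine ⟨hW0, hWt, ?_⟩
    set W := μ (ball ρ x (Λ * R)) with hWdef
    -- ball x R ⊆ ball x₀ (2 K₀ R)
    have h1 : ball ρ x R ⊆ ball ρ x₀ (2 * K₀ * R) := by
      intro z hz
      have ht := hX.triangle x₀ x z
      have hsymm : ρ x₀ x = D := by rw [hX.symm x₀ x]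
      have hz' : ρ x z < R := hz
      have hpos : (0:ℝ) < K₀ := by linarith
      show ρ x₀ z < 2 * K₀ * R
      calc ρ x₀ z ≤ K₀ * (ρ x₀ x + ρ x z) := ht
        _ < K₀ * (2 * R) := mul_lt_mul_of_pos_left (by rw [hsymm]; linarith) hpos
        _ = 2 * K₀ * R := by ring
    -- ball x₀ (lam^j * (2 K₀ R)) ⊆ ball x (Λ R)
    have h2 : ball ρ x₀ (lam ^ j * (2 * K₀ * R)) ⊆ ball ρ x (Λ * R) := by
      intro z hz
      have ht := hX.triangle x x₀ z
      have hz' : ρ x₀ z < lam ^ j * (2 * K₀ * R) := hz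
      have hpos : (0:ℝ) < K₀ := by linarith
      have hsymm : ρ x x₀ = D := rfl
      show ρ x z < Λ * R
      have e1 : K₀ ≤ K₀ ^ 2 * lam ^ j := by nlinarith
      have p1 : 4 * K₀ ^ 2 * lam ^ j * R ≤ Λ * R := mul_le_mul_of_nonneg_right hΛ4 hR0.le
      have p2 : K₀ * R ≤ K₀ ^ 2 * lam ^ j * R := mul_le_mul_of_nonneg_right e1 hR0.le
      have p3 : (0:ℝ) ≤ K₀ ^ 2 * lam ^ j * R := by positivity
      calc ρ x z ≤ K₀ * (ρ x x₀ + ρ x₀ z) := ht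
        _ < K₀ * (R + lam ^ j * (2 * K₀ * R)) :=
            mul_lt_mul_of_pos_left (by rw [hsymm]; linarith) hpos
        _ = K₀ * R + 2 * (K₀ ^ 2 * lam ^ j * R) := by ring
        _ ≤ Λ * R := by linarith
    have h2K : r₀ ≤ 2 * K₀ * R := by
      have : r₀ ≤ R := le_trans (le_max_left _ _) hR
      nlinarith
    set V := μ (ball ρ x₀ (2 * K₀ * R)) with hVdef
    have h2V : 2 * V ≤ W := by
      have hi := hiter j (2 * K₀ * R) h2K
      have hle : μ (ball ρ x₀ (lam ^ j * (2 * K₀ * R))) ≤ W := measure_mono h2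
      have h2c : (2:ℝ≥0∞) ≤ (ENNReal.ofReal c₀) ^ j := by
        rw [← ENNReal.ofReal_pow (by linarith)]
        calc (2:ℝ≥0∞) = ENNReal.ofReal 2 := by simp
          _ ≤ ENNReal.ofReal (c₀ ^ j) := ENNReal.ofReal_le_ofReal hj.le
      calc 2 * V ≤ (ENNReal.ofReal c₀) ^ j * V := mul_le_mul_left h2c _
        _ ≤ μ (ball ρ x₀ (lam ^ j * (2 * K₀ * R))) := hi
        _ ≤ W := hle
    have hVW : V ≤ W / 2 := by
      rw [ENNReal.le_div_iff_mul_le (Or.inl two_ne_zero) (Or.inl ENNReal.ofNat_ne_top)]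
      rwa [mul_comm] at h2V
    have hsplit : W - μ (ball ρ x R) ≤ μ (ball ρ x (Λ * R) \ ball ρ x R) := by
      rw [tsub_le_iff_right]
      calc W ≤ μ ((ball ρ x (Λ * R) \ ball ρ x R) ∪ ball ρ x R) :=
            measure_mono (fun z hz => by
              by_cases hzR : z ∈ ball ρ x R
              · exact Or.inr hzR
              · exact Or.inl ⟨hz, hzR⟩)
        _ ≤ _ := measure_union_le _ _
    have hhalf : W / 2 ≤ μ (ball ρ x (Λ * R) \ ball ρ x R) := by
      calc W / 2 = W - W / 2 := (ENNReal.sub_half hWt.ne).symm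
        _ ≤ W - V := tsub_le_tsub_left hVW W
        _ ≤ W - μ (ball ρ x R) := tsub_le_tsub_left (measure_mono h1 |>.trans_eq hVdef.symm) W
        _ ≤ _ := hsplit
    rw [ENNReal.div_le_iff_le_mul (Or.inl two_ne_zero) (Or.inl ENNReal.ofNat_ne_top)] at hhalf
    rwa [mul_comm] at hhalf
  have hq' : q ≠ 0 := hq.ne'
  -- eventual bound for the liminf
  have hmain : ∀ᶠ s in 𝓝[>] (0:ℝ), ENNReal.ofReal (Λ ^ (-(2 * q)) / 4) ≤
      ENNReal.ofReal s *
        ∫⁻ y in (ball ρ x (s ^ (-(1 / q))))ᶜ,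
          1 / (U ρ μ x y * ENNReal.ofReal (ρ x y) ^ (s * q)) ∂μ := by
    have hss : Tendsto (fun s : ℝ => s ^ (s : ℝ)) (𝓝[>] (0:ℝ)) (𝓝 1) := by
      have h0 : Tendsto (fun s : ℝ => Real.log s * s) (𝓝[>] (0:ℝ)) (𝓝 0) := by
        have := _root_.tendsto_log_mul_rpow_nhdsGT_zero (r := 1) one_pos
        refine this.congr' ?_
        filter_upwards [self_mem_nhdsWithin] with s hs
        rw [Real.rpow_one]
      have h1 : Tendsto (fun s : ℝ => Real.exp (Real.log s * s)) (𝓝[>] (0:ℝ)) (𝓝 1) := by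
        have := (Real.continuous_exp.tendsto 0).comp h0
        simpa [Function.comp_def] using this
      refine h1.congr' ?_
      filter_upwards [self_mem_nhdsWithin] with s hs
      rw [Real.rpow_def_of_pos hs]
    have hev1 : ∀ᶠ s in 𝓝[>] (0:ℝ), (1/2 : ℝ) ≤ s ^ (s:ℝ) :=
      hss.eventually (eventually_ge_nhds (by norm_num))
    have hev2 : ∀ᶠ s in 𝓝[>] (0:ℝ), s < min 1 (R₁ ^ (-q)) := by
      apply eventually_nhdsWithin_of_eventually_nhds
      exact eventually_lt_nhds (by positivity)
    filter_upwards [hev1, hev2, self_mem_nhdsWithin] with s hs1 hs2 hs0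
    have hs0' : (0:ℝ) < s := hs0
    have hsle1 : s ≤ 1 := le_of_lt (lt_of_lt_of_le hs2 (min_le_left _ _))
    have hsleR : s ≤ R₁ ^ (-q) := le_of_lt (lt_of_lt_of_le hs2 (min_le_right _ _))
    set R : ℝ := s ^ (-(1 / q)) with hRdef
    have hRge : R₁ ≤ R := by
      have h1 : (R₁ ^ (-q)) ^ (-(1/q)) ≤ s ^ (-(1/q)) :=
        Real.rpow_le_rpow_of_nonpos hs0' hsleR (neg_nonpos.mpr (by positivity))
      calc R₁ = (R₁ ^ (-q)) ^ (-(1/q)) := by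
            rw [← Real.rpow_mul hR₁0.le, show (-q) * (-(1/q)) = 1 by field_simp,
              Real.rpow_one]
        _ ≤ R := h1
    have hR0 : 0 < R := lt_of_lt_of_le hR₁0 hRge
    set n : ℕ := ⌈1 / s⌉₊ with hndef
    have hn1 : 1 ≤ s * (n : ℝ) := by
      have := Nat.le_ceil (1 / s)
      calc (1:ℝ) = s * (1 / s) := by field_simp
        _ ≤ s * n := by nlinarith
    have hn2 : (n : ℝ) ≤ 1 / s + 1 := (Nat.ceil_lt_add_one (by positivity)).le
    have hnsq : (n : ℝ) * (s * q) ≤ 2 * q := by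
      have h1 : (n : ℝ) * s ≤ 1 + s := by
        calc (n:ℝ) * s ≤ (1/s + 1) * s := by nlinarith
          _ = 1 + s := by field_simp
      nlinarith
    have hkey := key_lintegral ρ μ x hX.measurableSet_ball Λ R₁ (s * q) hΛ1 hR₁0
      (by positivity) hA n R hRge
    have hstep := mul_le_mul_right hkey (ENNReal.ofReal s)
    refine le_trans ?_ hstep
    -- now a purely real computation
    have hT0 : (0:ℝ) < Λ ^ n * R := by positivity
    have hTe0 : (0:ℝ) < (Λ ^ n * R) ^ (s * q) := Real.rpow_pos_of_pos hT0 _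
    have hcast : ENNReal.ofReal s * ((n : ℝ≥0∞) * (2⁻¹ * (ENNReal.ofReal (Λ ^ n * R) ^ (s * q))⁻¹))
        = ENNReal.ofReal (s * ((n:ℝ) * (2⁻¹ * ((Λ ^ n * R) ^ (s * q))⁻¹))) := by
      rw [ENNReal.ofReal_rpow_of_pos hT0, ← ENNReal.ofReal_inv_of_pos hTe0]
      rw [show ((2:ℝ≥0∞))⁻¹ = ENNReal.ofReal 2⁻¹ by
        rw [ENNReal.ofReal_inv_of_pos two_pos, ENNReal.ofReal_ofNat]]
      rw [← ENNReal.ofReal_natCast n]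
      rw [← ENNReal.ofReal_mul (by positivity), ← ENNReal.ofReal_mul (by positivity),
        ← ENNReal.ofReal_mul (by positivity)]
    rw [hcast]
    apply ENNReal.ofReal_le_ofReal
    -- real inequality
    have hRe : R ^ (s * q) = s ^ (-s : ℝ) := by
      rw [hRdef, ← Real.rpow_mul hs0'.le]
      congr 1
      field_simp
    have hΛe : (Λ ^ n : ℝ) ^ (s * q) = Λ ^ ((n : ℝ) * (s * q)) := by
      rw [← Real.rpow_natCast Λ n, ← Real.rpow_mul hΛpos.le]
    have hTsplit : (Λ ^ n * R) ^ (s * q) = Λ ^ ((n:ℝ) * (s * q)) * s ^ (-s : ℝ) := by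
      rw [Real.mul_rpow (by positivity) hR0.le, hΛe, hRe]
    rw [hTsplit, mul_inv]
    have hb : Λ ^ (-(2 * q)) ≤ (Λ ^ ((n:ℝ) * (s * q)))⁻¹ := by
      rw [← Real.rpow_neg hΛpos.le]
      exact Real.rpow_le_rpow_of_exponent_le hΛ1 (by linarith)
    have hc : (1/2 : ℝ) ≤ (s ^ (-s : ℝ))⁻¹ := by
      rw [← Real.rpow_neg hs0'.le, neg_neg]
      exact hs1
    have hbpos : (0:ℝ) < Λ ^ (-(2*q)) := Real.rpow_pos_of_pos hΛpos _
    have hb2pos : (0:ℝ) < (Λ ^ ((n:ℝ) * (s * q)))⁻¹ := by positivity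
    nlinarith [mul_le_mul hb hc (by norm_num) hb2pos.le,
      mul_le_mul hn1 (mul_le_mul hb hc (by norm_num) hb2pos.le)
        (by positivity) (by positivity)]
  exact le_liminf_of_le (by isBoundedDefault) hmain

end Paper
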